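/- arXiv:1609.04547 — 4 statements merged into one kernel-verified Lean document; each statement's English description precedes it below -/
import Mathlib

section
/- Let G be a finite simple graph with degree sequence d_(1) ≥ d_(2) ≥ … ≥ d_(N) listed in non-increasing order, and let c be a {0,1}-characteristic on its vertices with n1 ≥ 1 vertices having characteristic 1. Then the number m11 of (1-1) edges satisfies m11 ≤ min( M, binom(n1,2), ⌈ (Σ_{i=1}^{n1} min(d_(i), n1 − 1)) / 2 ⌉ ), where the last sum ranges over the n1 largest degrees of G. -/
/-- The number of edges of `G` whose two endpoints both have characteristic `1` (`true`). -/
def m11 {V : Type*} [Fintype V] [DecidableEq V] (G : SimpleGraph V) [DecidableRel G.Adj]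
    (c : V → Bool) : ℕ :=
  (G.edgeFinset.filter (fun e => ∀ v ∈ e, c v = true)).card

private lemma le_val_strictMono {n N : ℕ} {f : Fin n → Fin N} (hf : StrictMono f) :
    ∀ m (h : m < n), m ≤ (f ⟨m, h⟩ : ℕ) := by
  intro m
  induction m with
  | zero => intro h; exact Nat.zero_le _
  | succ m ih =>
    intro h
    have h' : m < n := Nat.lt_of_succ_lt h
    have hlt : f ⟨m, h'⟩ < f ⟨m + 1, h⟩ := hf (by simp [Fin.lt_def])
    have := ih h'
    rw [Fin.lt_def] at hlt
    omega

private lemma sum_le_head {N n : ℕ} (g : Fin N → ℕ) (hg : Antitone g)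
    (T : Finset (Fin N)) (hT : T.card = n) :
    ∑ i ∈ T, g i ≤ ∑ i ∈ Finset.univ.filter (fun i : Fin N => (i : ℕ) < n), g i := by
  have hn : n ≤ N := by
    have := Finset.card_le_card (Finset.subset_univ T)
    simpa [hT] using this
  set f := T.orderEmbOfFin hT with hf
  have himg : Finset.image f Finset.univ = T := by
    ext x
    simp only [Finset.mem_image, Finset.mem_univ, true_and]
    constructor
    · rintro ⟨k, rfl⟩; exact Finset.orderEmbOfFin_mem T hT k
    · intro hx
      have : x ∈ Set.range f := by rw [Finset.range_orderEmbOfFin]; exact hx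
      exact this
  have himg2 : Finset.univ.filter (fun i : Fin N => (i : ℕ) < n)
      = Finset.image (Fin.castLE hn) Finset.univ := by
    ext x
    simp only [Finset.mem_filter, Finset.mem_univ, true_and, Finset.mem_image]
    constructor
    · intro hx; exact ⟨⟨x, hx⟩, rfl⟩
    · rintro ⟨k, rfl⟩; exact k.2
  rw [← himg, himg2,
    Finset.sum_image (fun a _ b _ h => f.injective h),
    Finset.sum_image (fun a _ b _ h => (Fin.castLE_injective hn) h)]
  apply Finset.sum_le_sum
  intro k _
  apply hg
  rw [Fin.le_def]
  simpa using le_val_strictMono f.strictMono k k.2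

/-- with the degree sequence `d : Fin N → ℕ` of `G` listed in non-increasing
order, `m11 ≤ min(M, binom(n1,2), ⌈(∑_{i=1}^{n1} min(d_(i), n1 - 1)) / 2⌉)`, the sum
ranging over the `n1` largest degrees.  The ceiling `⌈s/2⌉` is written `(s + 1) / 2` in ℕ. -/
theorem m11_upper_bound {V : Type*} [Fintype V] [DecidableEq V]
    (G : SimpleGraph V) [DecidableRel G.Adj] (c : V → Bool)
    (N M n1 : ℕ) (hN : Fintype.card V = N) (hM : G.edgeFinset.card = M)
    (hn1 : (Finset.univ.filter (fun v => c v = true)).card = n1) (hn1pos : 1 ≤ n1)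
    (d : Fin N → ℕ) (hanti : Antitone d)
    (e : Fin N ≃ V) (hd : ∀ i, d i = G.degree (e i)) :
    m11 G c ≤ min M (min (n1.choose 2)
      (((∑ i ∈ Finset.univ.filter (fun i : Fin N => (i : ℕ) < n1),
          min (d i) (n1 - 1)) + 1) / 2)) := by
  classical
  set S : Finset V := Finset.univ.filter (fun v => c v = true) with hS
  -- the subgraph of edges with both endpoints of characteristic 1
  let G' : SimpleGraph V :=
    { Adj := fun u v => G.Adj u v ∧ c u = true ∧ c v = true
      symm := ⟨fun u v ⟨h, hu, hv⟩ => ⟨h.symm, hv, hu⟩⟩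
      loopless := ⟨fun v ⟨h, _, _⟩ => G.loopless.irrefl v h⟩ }
  have : DecidableRel G'.Adj := fun u v =>
    inferInstanceAs (Decidable (G.Adj u v ∧ c u = true ∧ c v = true))
  -- m11 is the edge count of G'
  have hm11 : m11 G c = G'.edgeFinset.card := by
    unfold m11
    congr 1
    ext x
    induction x with
    | _ u v =>
      simp only [Finset.mem_filter, SimpleGraph.mem_edgeFinset, SimpleGraph.mem_edgeSet,
        Sym2.mem_iff, G']
      constructor
      · rintro ⟨h, hall⟩
        exact ⟨h, hall u (Or.inl rfl), hall v (Or.inr rfl)⟩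
      · rintro ⟨h, hu, hv⟩
        refine ⟨h, ?_⟩
        rintro w (rfl | rfl) <;> assumption
  -- handshake
  have hhand : ∑ v, G'.degree v = 2 * m11 G c := by
    rw [hm11]; exact SimpleGraph.sum_degrees_eq_twice_card_edges G'
  -- degree is 0 off S
  have hzero : ∀ v ∉ S, G'.degree v = 0 := by
    intro v hv
    rw [SimpleGraph.degree, Finset.card_eq_zero]
    ext w
    simp only [SimpleGraph.mem_neighborFinset, Finset.notMem_empty, iff_false]
    rintro ⟨_, hcv, _⟩
    exact hv (by simp [hS, hcv])
  -- degree bound inside S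
  have hdegS : ∀ v ∈ S, G'.degree v ≤ min (G.degree v) (n1 - 1) := by
    intro v hv
    refine le_min ?_ ?_
    · apply Finset.card_le_card
      intro w hw
      rw [SimpleGraph.mem_neighborFinset] at hw ⊢
      exact hw.1
    · have hsub : G'.neighborFinset v ⊆ S.erase v := by
        intro w hw
        rw [SimpleGraph.mem_neighborFinset] at hw
        refine Finset.mem_erase.2 ⟨fun h => G.loopless.irrefl v (h ▸ hw.1), ?_⟩
        simp [hS, hw.2.2]
      calc G'.degree v ≤ (S.erase v).card := Finset.card_le_card hsub
        _ = n1 - 1 := by rw [Finset.card_erase_of_mem hv, hn1]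
  -- sum of degrees over S
  have hsumS : 2 * m11 G c ≤ ∑ v ∈ S, min (G.degree v) (n1 - 1) := by
    rw [← hhand, ← Finset.sum_subset (Finset.subset_univ S)
      (fun v _ hv => hzero v hv)]
    exact Finset.sum_le_sum hdegS
  -- transfer to Fin N
  set T : Finset (Fin N) := Finset.univ.filter (fun i => c (e i) = true) with hT
  have hTcard : T.card = n1 := by
    rw [← hn1]
    apply Finset.card_bij (fun i _ => e i)
    · intro i hi; simp only [hT, Finset.mem_filter, Finset.mem_univ, true_and] at hi
      simp [hS, hi]
    · intro a _ b _ h; exact e.injective h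
    · intro v hv
      refine ⟨e.symm v, ?_, by simp⟩
      simp only [hT, Finset.mem_filter, Finset.mem_univ, true_and, Equiv.apply_symm_apply]
      simpa [hS] using hv
  have hsumT : ∑ v ∈ S, min (G.degree v) (n1 - 1) = ∑ i ∈ T, min (d i) (n1 - 1) := by
    refine (Finset.sum_equiv e ?_ ?_).symm
    · intro i; simp [hT, hS]
    · intro i _; rw [hd]
  have hganti : Antitone (fun i : Fin N => min (d i) (n1 - 1)) :=
    fun i j h => min_le_min (hanti h) le_rfl
  have hhead := sum_le_head _ hganti T hTcard
  have key : 2 * m11 G c ≤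
      ∑ i ∈ Finset.univ.filter (fun i : Fin N => (i : ℕ) < n1), min (d i) (n1 - 1) := by
    calc 2 * m11 G c ≤ ∑ v ∈ S, min (G.degree v) (n1 - 1) := hsumS
      _ = ∑ i ∈ T, min (d i) (n1 - 1) := hsumT
      _ ≤ _ := hhead
  -- the three bounds
  have hb1 : m11 G c ≤ M := by
    rw [← hM]; exact Finset.card_filter_le _ _
  have hb2 : 2 * m11 G c ≤ n1 * (n1 - 1) := by
    calc 2 * m11 G c ≤ ∑ v ∈ S, min (G.degree v) (n1 - 1) := hsumS
      _ ≤ ∑ _v ∈ S, (n1 - 1) := Finset.sum_le_sum (fun v _ => min_le_right _ _)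
      _ = n1 * (n1 - 1) := by rw [Finset.sum_const, hn1, smul_eq_mul]
  rw [Nat.choose_two_right]
  omega
end

section
/- Let G= (V,E) be a finite simple graph with degree sequence d_(1) ≥ d_(2) ≥ … ≥ d_(N) listed in non-increasing order, and let c be a {0,1}-characteristic on its vertices with n1 vertices having characteristic 1 and n0 = N − n1 having characteristic 0. Let T(n1) = Σ_{i=N−n1+1}^{N} d_(i) be the sum of the n1 smallest degrees and H(n0) = Σ_{i=1}^{n0} d_(i) the sum of the n0 largest degrees. Then the number m11 of (1-1) edges satisfies m11 ≥ ⌊ (T(n1) − H(n0)) / 2 ⌋ whenever T(n1) ≥ H(n0); in particular m11 ≥ max(0, ⌊(T(n1) − H(n0))/2⌋) with the difference taken in the integers. -/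
open Finset

private lemma lem_le_apply' {k N : ℕ} {f : Fin k → Fin N} (hf : StrictMono f) (j : Fin k) :
    (j:ℕ) ≤ f j := by
  have : ∀ m : ℕ, ∀ j : Fin k, (j:ℕ) = m → m ≤ (f j : ℕ) := by
    intro m
    induction m with
    | zero => intro j _; omega
    | succ n ih =>
      intro j hj
      have hn : n < k := by omega
      have h1 := ih ⟨n, hn⟩ rfl
      have h2 : f ⟨n, hn⟩ < f j := hf (by simp [Fin.lt_def]; omega)
      rw [Fin.lt_def] at h2
      omega
  exact this _ j rfl

private lemma lem_apply_le' {k N : ℕ} {f : Fin k → Fin N} (hf : StrictMono f) (j : Fin k) :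
    (f j : ℕ) ≤ N - k + j := by
  have : ∀ m : ℕ, m < k → ∀ j : Fin k, (j:ℕ) = k - 1 - m → (f j : ℕ) ≤ N - 1 - m := by
    intro m
    induction m with
    | zero => intro _ j _; have := (f j).2; omega
    | succ n ih =>
      intro hm j hj
      have hj2 := j.2
      have hn : (j : ℕ) + 1 < k := by omega
      have h1 := ih (by omega) ⟨(j:ℕ)+1, hn⟩ (by simp; omega)
      have h2 : f j < f ⟨(j:ℕ)+1, hn⟩ := hf (by simp [Fin.lt_def])
      rw [Fin.lt_def] at h2
      omega
  have hj2 := j.2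
  have := this (k - 1 - (j:ℕ)) (by omega) j (by omega)
  have := (f j).2
  omega

/-- sum over a k-subset as a sum over `Fin k` -/
private lemma sum_subset_eq' {N k : ℕ} (d : Fin N → ℕ) (S : Finset (Fin N)) (h : S.card = k) :
    ∑ i ∈ S, d i = ∑ j : Fin k, d (S.orderEmbOfFin h j) := by
  have himg : Finset.image (S.orderEmbOfFin h) Finset.univ = S := by
    apply Finset.coe_injective
    rw [Finset.coe_image, Finset.coe_univ, Set.image_univ, Finset.range_orderEmbOfFin]
  conv_lhs => rw [← himg]
  rw [Finset.sum_image (by intro a _ b _ hab; exact (S.orderEmbOfFin h).injective hab)]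

private lemma head_bound' {N k : ℕ} (d : Fin N → ℕ) (hd : Antitone d) (S : Finset (Fin N))
    (h : S.card = k) :
    ∑ i ∈ S, d i ≤ ∑ i ∈ univ.filter (fun i : Fin N => (i : ℕ) < k), d i := by
  have hkN : k ≤ N := by
    simpa [h, Fintype.card_fin] using Finset.card_le_univ S
  have hset : univ.filter (fun i : Fin N => (i : ℕ) < k)
      = Finset.image (Fin.castLE hkN) univ := by
    ext i
    simp only [mem_filter, mem_univ, true_and, mem_image]
    constructor
    · intro hi; exact ⟨⟨i, hi⟩, rfl⟩
    · rintro ⟨j, rfl⟩; exact j.2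
  rw [hset, Finset.sum_image (by intro a _ b _ hab; exact Fin.castLE_injective hkN hab),
    sum_subset_eq' d S h]
  apply Finset.sum_le_sum
  intro j _
  exact hd (by rw [Fin.le_def]; simpa using lem_le_apply' (S.orderEmbOfFin h).strictMono j)

private lemma tail_bound' {N k : ℕ} (d : Fin N → ℕ) (hd : Antitone d) (S : Finset (Fin N))
    (h : S.card = k) :
    ∑ i ∈ univ.filter (fun i : Fin N => N - k ≤ (i : ℕ)), d i ≤ ∑ i ∈ S, d i := by
  have hkN : k ≤ N := by
    simpa [h, Fintype.card_fin] using Finset.card_le_univ S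
  have hg : ∀ j : Fin k, N - k + (j : ℕ) < N := by intro j; have := j.2; omega
  have hset : univ.filter (fun i : Fin N => N - k ≤ (i : ℕ))
      = Finset.image (fun j : Fin k => (⟨N - k + j, hg j⟩ : Fin N)) univ := by
    ext i
    simp only [mem_filter, mem_univ, true_and, mem_image]
    constructor
    · intro hi
      have hi2 := i.2
      exact ⟨⟨(i:ℕ) - (N - k), by omega⟩, by ext; simp; omega⟩
    · rintro ⟨j, rfl⟩; simp
  rw [hset, Finset.sum_image
      (by intro a _ b _ hab; rw [Fin.mk.injEq] at hab; exact Fin.val_injective (by omega)),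
    sum_subset_eq' d S h]
  apply Finset.sum_le_sum
  intro j _
  exact hd (by rw [Fin.le_def]; simpa using lem_apply_le' (S.orderEmbOfFin h).strictMono j)

private lemma keyineq' {V : Type*} [Fintype V] [DecidableEq V] (G : SimpleGraph V)
    [DecidableRel G.Adj] (c : V → Bool) :
    ∑ v ∈ univ.filter (fun v => c v = true), G.degree v ≤
      2 * m11 G c + ∑ v ∈ univ.filter (fun v => ¬ c v = true), G.degree v := by
  classical
  set A := univ.filter (fun v => c v = true) with hA
  set B := univ.filter (fun v => ¬ c v = true) with hB
  let G' : SimpleGraph V :=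
    { Adj := fun v w => G.Adj v w ∧ c v = true ∧ c w = true
      symm := by constructor; intro v w ⟨h1, h2, h3⟩; exact ⟨h1.symm, h3, h2⟩
      loopless := by constructor; intro v ⟨h1, _⟩; exact G.irrefl h1 }
  haveI : DecidableRel G'.Adj := fun v w => instDecidableAnd
  have hm11 : m11 G c = G'.edgeFinset.card := by
    unfold m11
    congr 1
    ext e
    induction e with
    | _ a b =>
      simp [SimpleGraph.mem_edgeFinset, SimpleGraph.mem_edgeSet, Sym2.mem_iff, G',
        and_assoc]
  have hs : ∑ v, G'.degree v = 2 * G'.edgeFinset.card :=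
    SimpleGraph.sum_degrees_eq_twice_card_edges G'
  have hdeg : ∀ v, G.degree v = ∑ w, if G.Adj v w then 1 else 0 := by
    intro v
    rw [← SimpleGraph.card_neighborFinset_eq_degree, SimpleGraph.neighborFinset_eq_filter,
      Finset.card_filter]
  have hdeg' : ∀ v, G'.degree v = ∑ w, if G'.Adj v w then 1 else 0 := by
    intro v
    rw [← SimpleGraph.card_neighborFinset_eq_degree, SimpleGraph.neighborFinset_eq_filter,
      Finset.card_filter]
  have hsplit : ∑ v ∈ A, G.degree v =
      (∑ v, G'.degree v) + ∑ v ∈ A, ∑ w ∈ B, (if G.Adj v w then 1 else 0) := by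
    have h1 : ∑ v, G'.degree v = ∑ v ∈ A, ∑ w ∈ A, (if G.Adj v w then 1 else 0) := by
      rw [Finset.sum_congr rfl (fun v _ => hdeg' v)]
      rw [hA]
      rw [Finset.sum_filter]
      apply Finset.sum_congr rfl
      intro v _
      by_cases hv : c v = true
      · simp only [hv, if_true]
        rw [Finset.sum_filter]
        apply Finset.sum_congr rfl
        intro w _
        by_cases hw : c w = true <;> simp [G', hv, hw]
      · simp only [hv, if_false]
        apply Finset.sum_eq_zero
        intro w _
        simp [G', hv]
    rw [h1]
    rw [← Finset.sum_add_distrib]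
    apply Finset.sum_congr rfl
    intro v _
    rw [hdeg v, hA, hB, ← Finset.sum_filter_add_sum_filter_not univ (fun w => c w = true)]
  have hcross : ∑ v ∈ A, ∑ w ∈ B, (if G.Adj v w then 1 else 0) ≤ ∑ w ∈ B, G.degree w := by
    rw [Finset.sum_comm]
    apply Finset.sum_le_sum
    intro w _
    rw [hdeg w]
    calc ∑ v ∈ A, (if G.Adj v w then 1 else 0)
        = ∑ v ∈ A, (if G.Adj w v then 1 else 0) := by
          apply Finset.sum_congr rfl; intro v _; simp only [G.adj_comm v w]
      _ ≤ ∑ v, (if G.Adj w v then 1 else 0) := by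
          apply Finset.sum_le_sum_of_subset_of_nonneg (Finset.filter_subset _ _)
          intros; positivity
  rw [hsplit, hs, ← hm11]
  omega

/-- with `T = T(n1)` the sum of the `n1` smallest degrees and `H = H(n0)` the
sum of the `n0` largest degrees (taken in ℤ), `m11 ≥ ⌊(T − H)/2⌋` whenever `T ≥ H`; in
particular `m11 ≥ max 0 ⌊(T − H)/2⌋`.  Floor division is `Int.fdiv`. -/
theorem m11_lower_bound {V : Type*} [Fintype V] [DecidableEq V]
    (G : SimpleGraph V) [DecidableRel G.Adj] (c : V → Bool)
    (N n1 n0 : ℕ) (hN : Fintype.card V = N)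
    (hn1 : (Finset.univ.filter (fun v => c v = true)).card = n1)
    (hn0 : n0 = N - n1)
    (d : Fin N → ℕ) (hanti : Antitone d)
    (e : Fin N ≃ V) (hd : ∀ i, d i = G.degree (e i))
    (T H : ℤ)
    (hT : T = ∑ i ∈ Finset.univ.filter (fun i : Fin N => N - n1 ≤ (i : ℕ)), (d i : ℤ))
    (hH : H = ∑ i ∈ Finset.univ.filter (fun i : Fin N => (i : ℕ) < n0), (d i : ℤ)) :
    (H ≤ T → (m11 G c : ℤ) ≥ (T - H).fdiv 2) ∧
      (m11 G c : ℤ) ≥ max 0 ((T - H).fdiv 2) := by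
  classical
  set A := univ.filter (fun v => c v = true) with hA
  set B := univ.filter (fun v => ¬ c v = true) with hB
  have hcardAB : A.card + B.card = N := by
    rw [hA, hB, Finset.card_filter_add_card_filter_not, Finset.card_univ, hN]
  have hcardB : B.card = N - n1 := by omega
  -- transfer sums over vertex subsets to sums over Fin N subsets
  have hsum : ∀ S : Finset V, ∑ i ∈ S.image e.symm, d i = ∑ v ∈ S, G.degree v := by
    intro S
    rw [Finset.sum_image (by intro a _ b _ hab; exact e.symm.injective hab)]
    apply Finset.sum_congr rfl
    intro v _
    rw [hd, Equiv.apply_symm_apply]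
  have hcardS : ∀ S : Finset V, (S.image e.symm).card = S.card := by
    intro S
    exact Finset.card_image_of_injective S e.symm.injective
  -- tail bound
  have hTle : ∑ i ∈ univ.filter (fun i : Fin N => N - n1 ≤ (i : ℕ)), d i ≤
      ∑ v ∈ A, G.degree v := by
    rw [← hsum A]
    exact tail_bound' d hanti (A.image e.symm) (by rw [hcardS, hn1])
  -- head bound
  have hHle : ∑ v ∈ B, G.degree v ≤
      ∑ i ∈ univ.filter (fun i : Fin N => (i : ℕ) < n0), d i := by
    rw [← hsum B]
    exact head_bound' d hanti (B.image e.symm) (by rw [hcardS, hcardB, hn0])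
  have hkey := keyineq' G c
  rw [← hA, ← hB] at hkey
  -- combine in ℕ
  have hmain : ∑ i ∈ univ.filter (fun i : Fin N => N - n1 ≤ (i : ℕ)), d i ≤
      2 * m11 G c + ∑ i ∈ univ.filter (fun i : Fin N => (i : ℕ) < n0), d i := by
    omega
  -- cast to ℤ
  have hTH : T - H ≤ 2 * (m11 G c : ℤ) := by
    rw [hT, hH]
    push_cast
    have := (Nat.cast_le (α := ℤ)).2 hmain
    push_cast at this
    linarith
  have hfdiv : (T - H).fdiv 2 ≤ (m11 G c : ℤ) := by
    rw [Int.fdiv_eq_ediv_of_nonneg _ (by norm_num)]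
    omega
  exact ⟨fun _ => hfdiv, max_le (by positivity) hfdiv⟩
end

section
/- Let G be a finite connected simple graph on N vertices with degree sequence d_(1) ≥ d_(2) ≥ … ≥ d_(N) listed in non-increasing order, and let c be a {0,1}-characteristic on its vertices with n1 vertices having characteristic 1, where 0 < n1 < N. Let T(n1) = Σ_{i=N−n1+1}^{N} d_(i) be the sum of the n1 smallest degrees. Then the number m10 of mixed (1-0) edges satisfies m10 ≥ max( 1, T(n1) − n1(n1 − 1) ), the difference being taken in the integers. -/
/-- The number of edges of `G` with one endpoint of characteristic `1` and one of
characteristic `0`. -/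
def m10 {V : Type*} [Fintype V] [DecidableEq V] (G : SimpleGraph V) [DecidableRel G.Adj]
    (c : V → Bool) : ℕ :=
  (G.edgeFinset.filter (fun e => (∃ v ∈ e, c v = true) ∧ (∃ v ∈ e, c v = false))).card

lemma tail_sum_le {N n1 : ℕ} (hpos : 0 < n1) (hle : n1 ≤ N) (d : Fin N → ℕ)
    (hanti : Antitone d) (A : Finset (Fin N)) (hA : A.card = n1) :
    ∑ i ∈ Finset.univ.filter (fun i : Fin N => N - n1 ≤ (i : ℕ)), d i ≤ ∑ i ∈ A, d i := by
  have hNpos : N - n1 < N := by omega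
  set p : Fin N := ⟨N - n1, hNpos⟩ with hp
  set tail : Finset (Fin N) := Finset.univ.filter (fun i : Fin N => N - n1 ≤ (i : ℕ)) with htail_def
  have htail_eq : tail = Finset.Ici p := by
    ext i
    simp [htail_def, Finset.mem_Ici, Fin.le_def, hp]
  have htail : tail.card = n1 := by
    rw [htail_eq, Fin.card_Ici]
    simp [hp]
    omega
  have hcard : (tail \ A).card = (A \ tail).card := by
    have h1 := Finset.card_inter_add_card_sdiff tail A
    have h2 := Finset.card_inter_add_card_sdiff A tail
    rw [Finset.inter_comm] at h2
    omega
  have hbound1 : ∀ i ∈ tail \ A, d i ≤ d p := by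
    intro i hi
    rw [Finset.mem_sdiff, htail_eq, Finset.mem_Ici] at hi
    exact hanti hi.1
  have hbound2 : ∀ i ∈ A \ tail, d p ≤ d i := by
    intro i hi
    rw [Finset.mem_sdiff, htail_eq, Finset.mem_Ici] at hi
    exact hanti (le_of_not_ge hi.2)
  have key : ∑ i ∈ tail \ A, d i ≤ ∑ i ∈ A \ tail, d i := by
    calc ∑ i ∈ tail \ A, d i ≤ (tail \ A).card • d p := Finset.sum_le_card_nsmul _ _ _ hbound1
    _ = (A \ tail).card • d p := by rw [hcard]
    _ ≤ ∑ i ∈ A \ tail, d i := Finset.card_nsmul_le_sum _ _ _ hbound2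
  have e1 := Finset.sum_inter_add_sum_sdiff tail A d
  have e2 := Finset.sum_inter_add_sum_sdiff A tail d
  rw [Finset.inter_comm] at e2
  omega

lemma exists_mixed_of_walk {V : Type*} {G : SimpleGraph V} {c : V → Bool} {u w : V}
    (p : G.Walk u w) (hu : c u = true) (hw : c w = false) :
    ∃ x y, G.Adj x y ∧ c x = true ∧ c y = false := by
  induction p with
  | nil => rw [hu] at hw; exact absurd hw (by simp)
  | @cons a b z hadj q ih =>
    by_cases hb : c b = true
    · exact ih hb hw
    · exact ⟨a, b, hadj, hu, by simpa using hb⟩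

lemma deg_sum_le {V : Type*} [Fintype V] [DecidableEq V] (G : SimpleGraph V)
    [DecidableRel G.Adj] (c : V → Bool) :
    ∑ v ∈ Finset.univ.filter (fun v => c v = true), G.degree v
      ≤ ((Finset.univ.filter (fun v => c v = true)).card ^ 2
          - (Finset.univ.filter (fun v => c v = true)).card) + m10 G c := by
  classical
  set S := Finset.univ.filter (fun v => c v = true) with hS
  set P : Finset (V × V) := Finset.univ.filter (fun p : V × V => c p.1 = true ∧ G.Adj p.1 p.2)
    with hPdef
  have hP : ∑ v ∈ S, G.degree v = P.card := by
    rw [hPdef, Finset.card_filter, Fintype.sum_prod_type, hS, Finset.sum_filter]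
    refine Finset.sum_congr rfl fun v _ => ?_
    by_cases hv : c v = true
    · simp only [hv, true_and, if_true]
      rw [SimpleGraph.degree, SimpleGraph.neighborFinset_eq_filter, Finset.card_filter]
    · simp [hv]
  set P1 := P.filter (fun p => c p.2 = true) with hP1
  set P2 := P.filter (fun p => ¬ c p.2 = true) with hP2
  have hsplit : P.card = P1.card + P2.card :=
    (Finset.card_filter_add_card_filter_not (s := P) (fun p : V × V => c p.2 = true)).symm
  have hP1le : P1.card ≤ S.card ^ 2 - S.card := by
    have hsub : P1 ⊆ S.offDiag := by
      intro p hp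
      rw [hP1, Finset.mem_filter, hPdef, Finset.mem_filter] at hp
      rw [Finset.mem_offDiag]
      exact ⟨by simp [hS, hp.1.2.1], by simp [hS, hp.2], hp.1.2.2.ne⟩
    calc P1.card ≤ S.offDiag.card := Finset.card_le_card hsub
    _ = S.card * S.card - S.card := Finset.offDiag_card S
    _ = S.card ^ 2 - S.card := by ring_nf
  have hP2le : P2.card ≤ m10 G c := by
    refine Finset.card_le_card_of_injOn (fun p : V × V => Sym2.mk p.1 p.2) ?_ ?_
    · intro p hp
      rw [hP2, Finset.mem_coe, Finset.mem_filter, hPdef, Finset.mem_filter] at hp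
      obtain ⟨⟨-, hc1, hadj⟩, hc2⟩ := hp
      rw [Bool.not_eq_true] at hc2
      simp only [m10, Finset.mem_coe, Finset.mem_filter]
      refine ⟨SimpleGraph.mem_edgeFinset.mpr hadj, ⟨p.1, ?_, hc1⟩, ⟨p.2, ?_, hc2⟩⟩
      · exact Sym2.mem_mk_left _ _
      · exact Sym2.mem_mk_right _ _
    · intro p hp q hq heq
      simp only [Finset.mem_coe, hP2, Finset.mem_filter, hPdef] at hp hq
      obtain ⟨⟨-, hp1, -⟩, hp2⟩ := hp
      obtain ⟨⟨-, hq1, -⟩, hq2⟩ := hq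
      rw [Bool.not_eq_true] at hp2 hq2
      simp only [Sym2.mk_eq_mk_iff, Prod.mk.injEq, Prod.ext_iff, Prod.swap] at heq
      rcases heq with h | h
      · exact Prod.ext h.1 h.2
      · exfalso
        rw [h.1, hq2] at hp1
        exact absurd hp1 (by simp)
  omega

/-- for a connected graph with `0 < n1 < N`, with `T = T(n1)` the sum of the
`n1` smallest degrees (in ℤ), `m10 ≥ max(1, T − n1(n1 − 1))`. -/
theorem m10_lower_bound {V : Type*} [Fintype V] [DecidableEq V]
    (G : SimpleGraph V) [DecidableRel G.Adj] (c : V → Bool)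
    (hconn : G.Connected)
    (N n1 : ℕ) (hN : Fintype.card V = N)
    (hn1 : (Finset.univ.filter (fun v => c v = true)).card = n1)
    (hpos : 0 < n1) (hlt : n1 < N)
    (d : Fin N → ℕ) (hanti : Antitone d)
    (e : Fin N ≃ V) (hd : ∀ i, d i = G.degree (e i))
    (T : ℤ)
    (hT : T = ∑ i ∈ Finset.univ.filter (fun i : Fin N => N - n1 ≤ (i : ℕ)), (d i : ℤ)) :
    (m10 G c : ℤ) ≥ max 1 (T - (n1 : ℤ) * ((n1 : ℤ) - 1)) := by
  set S := Finset.univ.filter (fun v => c v = true) with hS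
  -- Part 1 : m10 ≥ 1
  have h1 : 1 ≤ m10 G c := by
    obtain ⟨u, hu⟩ : ∃ u, c u = true := by
      obtain ⟨u, hu⟩ := Finset.card_pos.mp (hn1 ▸ hpos)
      exact ⟨u, (Finset.mem_filter.mp hu).2⟩
    obtain ⟨w, hw⟩ : ∃ w, c w = false := by
      by_contra h
      push_neg at h
      have : S = Finset.univ := Finset.eq_univ_iff_forall.mpr fun v => by
        simp only [hS, Finset.mem_filter, Finset.mem_univ, true_and]
        exact eq_true_of_ne_false (h v)
      rw [this, Finset.card_univ, hN] at hn1
      omega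
    obtain ⟨x, y, hadj, hx, hy⟩ := exists_mixed_of_walk ((hconn u w).some) hu hw
    rw [m10]
    apply Finset.card_pos.mpr
    refine ⟨s(x, y), Finset.mem_filter.mpr ⟨SimpleGraph.mem_edgeFinset.mpr hadj,
      ⟨x, Sym2.mem_mk_left _ _, hx⟩, ⟨y, Sym2.mem_mk_right _ _, hy⟩⟩⟩
  -- Part 2 : T - n1*(n1-1) ≤ m10
  have hA : (S.map e.symm.toEmbedding).card = n1 := by rw [Finset.card_map, hn1]
  have hstep1 : ∑ i ∈ Finset.univ.filter (fun i : Fin N => N - n1 ≤ (i : ℕ)), d i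
      ≤ ∑ v ∈ S, G.degree v := by
    have := tail_sum_le hpos hlt.le d hanti (S.map e.symm.toEmbedding) hA
    refine this.trans_eq ?_
    rw [Finset.sum_map]
    exact Finset.sum_congr rfl fun v _ => by rw [hd]; exact congrArg (fun x => G.degree x) (e.apply_symm_apply v)
  have hstep2 := deg_sum_le G c
  rw [← hS, hn1] at hstep2
  have h2 : T - (n1 : ℤ) * ((n1 : ℤ) - 1) ≤ (m10 G c : ℤ) := by
    have hcast : ((n1 ^ 2 - n1 : ℕ) : ℤ) = (n1 : ℤ) * ((n1 : ℤ) - 1) := by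
      have : n1 ≤ n1 ^ 2 := Nat.le_self_pow two_ne_zero n1
      push_cast [Nat.cast_sub this]
      ring
    have hTle : T ≤ ((∑ v ∈ S, G.degree v : ℕ) : ℤ) := by
      rw [hT]
      push_cast
      exact_mod_cast hstep1
    have := hTle.trans (by exact_mod_cast hstep2 : ((∑ v ∈ S, G.degree v : ℕ) : ℤ) ≤ ((n1 ^ 2 - n1 : ℕ) : ℤ) + (m10 G c : ℤ))
    rw [hcast] at this
    linarith
  rw [ge_iff_le, max_le_iff]
  exact ⟨by exact_mod_cast h1, h2⟩
end

section
/- Let G be a finite connected simple graph with N ≥ 2 vertices and M ≥ 1 edges, with degree sequence d_(1) ≥ … ≥ d_(N), and let c be a {0,1}-characteristic with n1 vertices having characteristic 1 and n0 = N − n1 having characteristic 0, where 0 < n1 < N. Set δ = 2M/(N(N−1)), m̄10 = n1·n0·δ, heterophilicity H = m10/m̄10, UBm10 = min(M, n1·n0, min(Σ_{i=1}^{n1} min(d_(i), n0), Σ_{i=1}^{n0} min(d_(i), n1))), LBm10 = max(1, T(n1) − n1(n1−1)) (difference in the integers), H_max = UBm10/m̄10 and H_min = LBm10/m̄10. Then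 H_min ≤ H ≤ H_max (as real numbers). -/
lemma sm_le {n : ℕ} {f : Fin n → ℕ} (hf : StrictMono f) (k : Fin n) : (k : ℕ) ≤ f k := by
  induction' hk : (k : ℕ) with m ih generalizing k
  · exact Nat.zero_le _
  · have hm : m < n := by omega
    have h1 : (⟨m, hm⟩ : Fin n) < k := by simp [Fin.lt_def, hk]
    have := hf h1
    have := ih ⟨m, hm⟩ rfl
    omega

lemma head_sum {N n : ℕ} (g : Fin N → ℕ) (hg : Antitone g) (A : Finset (Fin N))
    (hA : A.card = n) :
    ∑ i ∈ A, g i ≤ ∑ i ∈ Finset.univ.filter (fun i : Fin N => (i : ℕ) < n), g i := by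
  have hn : n ≤ N := by rw [← hA]; simpa using A.card_le_univ
  have hfil : ∑ i ∈ Finset.univ.filter (fun i : Fin N => (i : ℕ) < n), g i
      = ∑ k : Fin n, g ⟨k, lt_of_lt_of_le k.2 hn⟩ := by
    refine (Finset.sum_bij' (fun (i : Fin N) (hi : i ∈ Finset.univ.filter (fun i : Fin N => (i : ℕ) < n)) =>
        (⟨(i : ℕ), by simpa using hi⟩ : Fin n)) (fun k _ => ⟨k, lt_of_lt_of_le k.2 hn⟩) ?_ ?_ ?_ ?_ ?_)
    all_goals simp
  let f := A.orderIsoOfFin hA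
  have hsm : StrictMono (fun k : Fin n => ((f k : Fin N) : ℕ)) := by
    intro a b hab
    exact_mod_cast f.strictMono hab
  have hAsum : ∑ i ∈ A, g i = ∑ k : Fin n, g (f k : Fin N) := by
    rw [← Finset.sum_coe_sort A g]
    exact (Fintype.sum_equiv f.toEquiv _ _ (fun k => rfl)).symm
  rw [hAsum, hfil]
  apply Finset.sum_le_sum
  intro k _
  apply hg
  simp [Fin.le_def]
  exact sm_le hsm k

lemma tail_sum {N n : ℕ} (g : Fin N → ℕ) (hg : Antitone g) (A : Finset (Fin N))
    (hA : A.card = n) :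
    ∑ i ∈ Finset.univ.filter (fun i : Fin N => N - n ≤ (i : ℕ)), g i ≤ ∑ i ∈ A, g i := by
  have hn : n ≤ N := by rw [← hA]; simpa using A.card_le_univ
  have hfil : ∑ i ∈ Finset.univ.filter (fun i : Fin N => N - n ≤ (i : ℕ)), g i
      = ∑ k : Fin n, g ⟨N - n + k, by have := k.2; omega⟩ := by
    refine (Finset.sum_bij' (fun (i : Fin N) (hi : i ∈ Finset.univ.filter (fun i : Fin N => N - n ≤ (i : ℕ))) =>
        (⟨(i : ℕ) - (N - n), by have h1 := i.2; have h2 : N - n ≤ (i:ℕ) := (by simpa using hi); omega⟩ : Fin n))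
        (fun k _ => ⟨N - n + k, by have := k.2; omega⟩) ?_ ?_ ?_ ?_ ?_)
    · intro i hi; exact Finset.mem_univ _
    · intro k _; simp only [Finset.mem_filter, Finset.mem_univ, true_and]; omega
    · intro i hi
      simp only [Finset.mem_filter, Finset.mem_univ, true_and] at hi
      ext; simp; omega
    · intro k _
      ext; simp
    · intro i hi
      simp only [Finset.mem_filter, Finset.mem_univ, true_and] at hi
      congr 1
      ext; simp; omega
  let f := A.orderIsoOfFin hA
  have hub : ∀ k : Fin n, ((f k : Fin N) : ℕ) ≤ N - n + k := by
    have hsm : StrictMono (fun k : Fin n => N - 1 - ((f k.rev : Fin N) : ℕ)) := by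
      intro a b hab
      have h1 : b.rev < a.rev := by
        simp [Fin.lt_def, Fin.rev]
        have := a.2; have := b.2; have := Fin.lt_def.mp hab; omega
      have h2 : (f b.rev : Fin N) < (f a.rev : Fin N) := by exact_mod_cast f.strictMono h1
      have := ((f a.rev : Fin N)).2
      have := Fin.lt_def.mp h2
      simp only []
      omega
    intro k
    have := sm_le hsm k.rev
    have hr : k.rev.rev = k := Fin.rev_rev k
    rw [hr] at this
    have hk2 := k.2
    have hrev : (k.rev : ℕ) = n - 1 - k := by simp [Fin.rev]; omega
    have hfk := ((f k : Fin N)).2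
    omega
  have hAsum : ∑ i ∈ A, g i = ∑ k : Fin n, g (f k : Fin N) := by
    rw [← Finset.sum_coe_sort A g]
    exact (Fintype.sum_equiv f.toEquiv _ _ (fun k => rfl)).symm
  rw [hAsum, hfil]
  apply Finset.sum_le_sum
  intro k _
  apply hg
  simp [Fin.le_def]
  exact hub k

lemma m10_def {V : Type*} [Fintype V] [DecidableEq V] (G : SimpleGraph V) [DecidableRel G.Adj]
    (c : V → Bool) :
    (G.edgeFinset.filter (fun e => (∃ v ∈ e, c v = true) ∧ (∃ v ∈ e, c v = false))).card
      = ∑ v ∈ Finset.univ.filter (fun v => c v = true),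
          ((Finset.univ.filter (fun w => c w = false)).filter (fun w => G.Adj v w)).card := by
  classical
  have key : (G.edgeFinset.filter (fun e => (∃ v ∈ e, c v = true) ∧ (∃ v ∈ e, c v = false))).card
      = (((Finset.univ.filter (fun v : V => c v = true)) ×ˢ (Finset.univ.filter (fun w : V => c w = false))).filter
          (fun p => G.Adj p.1 p.2)).card := by
    apply Finset.card_bij' (fun e _ => if c (Quot.out e).1 then (Quot.out e) else ((Quot.out e).2, (Quot.out e).1))
      (fun p _ => Sym2.mk p.1 p.2)
    · intro e he
      simp only [Finset.mem_filter, SimpleGraph.mem_edgeFinset] at he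
      obtain ⟨hes, ⟨x, hxe, hx⟩, ⟨y, hye, hy⟩⟩ := he
      obtain ⟨a, b, ho⟩ : ∃ a b, Quot.out e = (a, b) := ⟨_, _, rfl⟩
      have heq : e = s(a, b) := by rw [← Quot.out_eq e, ho]
      rw [heq] at hes hxe hye
      have hadj : G.Adj a b := hes
      rw [Sym2.mem_iff] at hxe hye
      simp only [Finset.mem_filter, Finset.mem_product, Finset.mem_univ, true_and, ho]
      rcases hxe with rfl | rfl <;> rcases hye with rfl | rfl
      · simp_all
      · simp [hx, hy, hadj]
      · simp [hx, hy, hadj.symm]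
      · simp_all
    · rintro ⟨p1, p2⟩ hp
      simp only [Finset.mem_filter, Finset.mem_product, Finset.mem_univ, true_and] at hp
      obtain ⟨⟨h1, h0⟩, hadj⟩ := hp
      simp only [Finset.mem_filter, SimpleGraph.mem_edgeFinset]
      exact ⟨hadj, ⟨p1, by simp [Sym2.mem_iff], h1⟩, ⟨p2, by simp [Sym2.mem_iff], h0⟩⟩
    · intro e he
      obtain ⟨a, b, ho⟩ : ∃ a b, Quot.out e = (a, b) := ⟨_, _, rfl⟩
      have heq : e = s(a, b) := by rw [← Quot.out_eq e, ho]
      rw [ho, heq]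
      by_cases hca : c a
      · simp [hca]
      · simp [hca, Sym2.eq_swap]
    · rintro ⟨p1, p2⟩ hp
      simp only [Finset.mem_filter, Finset.mem_product, Finset.mem_univ, true_and] at hp
      obtain ⟨⟨h1, h0⟩, hadj⟩ := hp
      obtain ⟨a, b, ho⟩ : ∃ a b, Quot.out (Sym2.mk p1 p2) = (a, b) := ⟨_, _, rfl⟩
      have heq : s(p1, p2) = s(a, b) := by rw [← Quot.out_eq (Sym2.mk p1 p2), ho]
      have hpq : (p1 = a ∧ p2 = b) ∨ (p1 = b ∧ p2 = a) := Sym2.eq_iff.mp heq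
      rw [ho]
      rcases hpq with ⟨rfl, rfl⟩ | ⟨rfl, rfl⟩
      · simp only at h1 ⊢
        simp [h1]
      · simp only at h1 h0 ⊢
        simp [h0]
  rw [key, Finset.card_filter, Finset.sum_product]
  refine Finset.sum_congr rfl fun v _ => ?_
  rw [Finset.card_filter]

lemma cross_of_walk {V : Type*} (G : SimpleGraph V) (c : V → Bool) :
    ∀ {u w : V} (p : G.Walk u w), c u = true → c w = false →
      ∃ a b, G.Adj a b ∧ c a = true ∧ c b = false := by
  intro u w p
  induction p with
  | nil => intro h1 h2; rw [h1] at h2; exact absurd h2 (by simp)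
  | @cons u v w h q ih =>
    intro h1 h2
    by_cases hv : c v = true
    · exact ih hv h2
    · exact ⟨u, v, h, h1, by simpa using hv⟩

/-- for a connected graph with `0 < n1 < N`, the heterophilicity
`H = m10 / m̄10` is bounded by `H_min = LBm10 / m̄10` and `H_max = UBm10 / m̄10`, where
`UBm10 = min(M, n1·n0, min(∑_{i=1}^{n1} min(d_(i), n0), ∑_{i=1}^{n0} min(d_(i), n1)))` and
`LBm10 = max(1, T(n1) − n1(n1−1))` (difference in ℤ). -/
theorem heterophilicity_bounds {V : Type*} [Fintype V] [DecidableEq V]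
    (G : SimpleGraph V) [DecidableRel G.Adj] (c : V → Bool)
    (hconn : G.Connected)
    (N M n1 n0 : ℕ) (hN : Fintype.card V = N) (hM : G.edgeFinset.card = M)
    (hn1 : (Finset.univ.filter (fun v => c v = true)).card = n1)
    (hn0 : n0 = N - n1)
    (hN2 : 2 ≤ N) (hM1 : 1 ≤ M) (hpos : 0 < n1) (hlt : n1 < N)
    (d : Fin N → ℕ) (hanti : Antitone d)
    (e : Fin N ≃ V) (hd : ∀ i, d i = G.degree (e i))
    (UBm10 : ℕ)
    (hUB : UBm10 = min M (min (n1 * n0)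
      (min (∑ i ∈ Finset.univ.filter (fun i : Fin N => (i : ℕ) < n1), min (d i) n0)
           (∑ i ∈ Finset.univ.filter (fun i : Fin N => (i : ℕ) < n0), min (d i) n1))))
    (T LBm10 : ℤ)
    (hT : T = ∑ i ∈ Finset.univ.filter (fun i : Fin N => N - n1 ≤ (i : ℕ)), (d i : ℤ))
    (hLB : LBm10 = max 1 (T - (n1 : ℤ) * ((n1 : ℤ) - 1)))
    (δ mbar10 H Hmax Hmin : ℝ)
    (hδ : δ = 2 * M / (N * ((N : ℝ) - 1)))
    (hmbar : mbar10 = (n1 : ℝ) * (n0 : ℝ) * δ)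
    (hH : H = (m10 G c : ℝ) / mbar10)
    (hHmax : Hmax = (UBm10 : ℝ) / mbar10)
    (hHmin : Hmin = (LBm10 : ℝ) / mbar10) :
    Hmin ≤ H ∧ H ≤ Hmax := by
  classical
  set S1 := Finset.univ.filter (fun v => c v = true) with hS1
  set S0 := Finset.univ.filter (fun v => c v = false) with hS0def
  -- cardinality of S0
  have hpart : S1.card + S0.card = N := by
    have h := Finset.card_filter_add_card_filter_not
      (s := (Finset.univ : Finset V)) (p := fun v => c v = true)
    have h2 : S0 = Finset.univ.filter (fun v => ¬ c v = true) := by ext v; simp [hS0def]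
    rw [← hN, ← Finset.card_univ, ← h, h2]
  have hS0card : S0.card = n0 := by omega
  have hn0pos : 0 < n0 := by omega
  -- the two expressions for m10
  have key1 : m10 G c = ∑ v ∈ S1, (S0.filter (fun w => G.Adj v w)).card := m10_def G c
  have key0 : m10 G c = ∑ v ∈ S0, (S1.filter (fun w => G.Adj v w)).card := by
    have hsw : m10 G c = m10 G (fun v => !c v) := by
      unfold m10
      congr 1
      apply Finset.filter_congr
      intro x hx
      simp only [Bool.not_eq_true', Bool.not_eq_false']
      rw [and_comm]
    rw [hsw, show m10 G (fun v => !c v) = _ from m10_def G (fun v => !c v)]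
    have hsets1 : Finset.univ.filter (fun v => (!c v) = true) = S0 := by
      ext v; simp [hS0def]
    have hsets0 : Finset.univ.filter (fun w => (!c w) = false) = S1 := by
      ext v; simp [hS1]
    simp only [hsets1, hsets0]
  -- image sets on Fin N
  set A1 := S1.image e.symm with hA1
  set A0 := S0.image e.symm with hA0
  have hA1card : A1.card = n1 := by rw [hA1, Finset.card_image_of_injective _ e.symm.injective, hn1]
  have hA0card : A0.card = n0 := by rw [hA0, Finset.card_image_of_injective _ e.symm.injective, hS0card]
  have himg1 : ∀ (f : V → ℕ), ∑ i ∈ A1, f (e i) = ∑ v ∈ S1, f v := by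
    intro f
    rw [hA1, Finset.sum_image (fun x _ y _ h => e.symm.injective h)]
    exact Finset.sum_congr rfl fun v _ => by rw [e.apply_symm_apply]
  have himg0 : ∀ (f : V → ℕ), ∑ i ∈ A0, f (e i) = ∑ v ∈ S0, f v := by
    intro f
    rw [hA0, Finset.sum_image (fun x _ y _ h => e.symm.injective h)]
    exact Finset.sum_congr rfl fun v _ => by rw [e.apply_symm_apply]
  -- upper bounds
  have hub1 : m10 G c ≤ M := by
    rw [← hM]; exact Finset.card_filter_le _ _
  have hub2 : m10 G c ≤ n1 * n0 := by
    rw [key1]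
    calc ∑ v ∈ S1, (S0.filter (fun w => G.Adj v w)).card
        ≤ ∑ _v ∈ S1, n0 := Finset.sum_le_sum fun v _ => le_trans (Finset.card_filter_le _ _) hS0card.le
      _ = n1 * n0 := by rw [Finset.sum_const, hn1, smul_eq_mul]
  have hcnt1 : ∀ v, (S0.filter (fun w => G.Adj v w)).card ≤ min (G.degree v) n0 := by
    intro v
    refine le_min ?_ (le_trans (Finset.card_filter_le _ _) hS0card.le)
    rw [← SimpleGraph.card_neighborFinset_eq_degree]
    apply Finset.card_le_card
    intro w hw
    rw [SimpleGraph.mem_neighborFinset]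
    exact (Finset.mem_filter.mp hw).2
  have hcnt0 : ∀ v, (S1.filter (fun w => G.Adj v w)).card ≤ min (G.degree v) n1 := by
    intro v
    refine le_min ?_ (le_trans (Finset.card_filter_le _ _) hn1.le)
    rw [← SimpleGraph.card_neighborFinset_eq_degree]
    apply Finset.card_le_card
    intro w hw
    rw [SimpleGraph.mem_neighborFinset]
    exact (Finset.mem_filter.mp hw).2
  have hub3 : m10 G c ≤ ∑ i ∈ Finset.univ.filter (fun i : Fin N => (i : ℕ) < n1), min (d i) n0 := by
    rw [key1]
    have h1 : ∑ v ∈ S1, (S0.filter (fun w => G.Adj v w)).card ≤ ∑ v ∈ S1, min (G.degree v) n0 :=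
      Finset.sum_le_sum fun v _ => hcnt1 v
    have h2 : ∑ v ∈ S1, min (G.degree v) n0 = ∑ i ∈ A1, min (d i) n0 := by
      rw [← himg1 (fun v => min (G.degree v) n0)]
      exact Finset.sum_congr rfl fun i _ => by rw [hd i]
    have h3 : ∑ i ∈ A1, min (d i) n0
        ≤ ∑ i ∈ Finset.univ.filter (fun i : Fin N => (i : ℕ) < n1), min (d i) n0 :=
      head_sum _ (fun i j hij => min_le_min (hanti hij) le_rfl) A1 hA1card
    omega
  have hub4 : m10 G c ≤ ∑ i ∈ Finset.univ.filter (fun i : Fin N => (i : ℕ) < n0), min (d i) n1 := by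
    rw [key0]
    have h1 : ∑ v ∈ S0, (S1.filter (fun w => G.Adj v w)).card ≤ ∑ v ∈ S0, min (G.degree v) n1 :=
      Finset.sum_le_sum fun v _ => hcnt0 v
    have h2 : ∑ v ∈ S0, min (G.degree v) n1 = ∑ i ∈ A0, min (d i) n1 := by
      rw [← himg0 (fun v => min (G.degree v) n1)]
      exact Finset.sum_congr rfl fun i _ => by rw [hd i]
    have h3 : ∑ i ∈ A0, min (d i) n1
        ≤ ∑ i ∈ Finset.univ.filter (fun i : Fin N => (i : ℕ) < n0), min (d i) n1 :=
      head_sum _ (fun i j hij => min_le_min (hanti hij) le_rfl) A0 hA0card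
    omega
  have hubfin : m10 G c ≤ UBm10 := by
    rw [hUB]
    exact le_min hub1 (le_min hub2 (le_min hub3 hub4))
  -- lower bound: at least one cross edge
  have hlb1 : 1 ≤ m10 G c := by
    obtain ⟨v1, hv1⟩ := Finset.card_pos.mp (by rw [hn1]; exact hpos)
    obtain ⟨v0, hv0⟩ := Finset.card_pos.mp (by rw [hS0card]; exact hn0pos)
    have hcv1 : c v1 = true := (Finset.mem_filter.mp hv1).2
    have hcv0 : c v0 = false := (Finset.mem_filter.mp hv0).2
    obtain ⟨p⟩ := hconn.preconnected v1 v0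
    obtain ⟨a, b, hab, ha, hb⟩ := cross_of_walk G c p hcv1 hcv0
    rw [m10]
    rw [Nat.one_le_iff_ne_zero, ← Nat.pos_iff_ne_zero, Finset.card_pos]
    refine ⟨s(a, b), ?_⟩
    rw [Finset.mem_filter, SimpleGraph.mem_edgeFinset]
    exact ⟨hab, ⟨a, by simp [Sym2.mem_iff], ha⟩, ⟨b, by simp [Sym2.mem_iff], hb⟩⟩
  -- lower bound: degree sum
  have hdeg : ∀ v : V, G.degree v
      = (S1.filter (fun w => G.Adj v w)).card + (S0.filter (fun w => G.Adj v w)).card := by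
    intro v
    have h := Finset.card_filter_add_card_filter_not
      (s := Finset.univ.filter (fun w => G.Adj v w)) (p := fun w => c w = true)
    rw [← SimpleGraph.card_neighborFinset_eq_degree, SimpleGraph.neighborFinset_eq_filter, ← h]
    congr 1
    · rw [Finset.filter_comm]
    · rw [Finset.filter_comm]
      congr 1
      ext w
      simp [hS0def]
  have hlb2 : ∑ v ∈ S1, G.degree v ≤ n1 * (n1 - 1) + m10 G c := by
    rw [key1]
    have hsplit : ∑ v ∈ S1, G.degree v
        = ∑ v ∈ S1, (S1.filter (fun w => G.Adj v w)).card
          + ∑ v ∈ S1, (S0.filter (fun w => G.Adj v w)).card := by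
      rw [← Finset.sum_add_distrib]
      exact Finset.sum_congr rfl fun v _ => hdeg v
    have hsm : ∑ v ∈ S1, (S1.filter (fun w => G.Adj v w)).card ≤ n1 * (n1 - 1) := by
      calc ∑ v ∈ S1, (S1.filter (fun w => G.Adj v w)).card
          ≤ ∑ _v ∈ S1, (n1 - 1) := by
            apply Finset.sum_le_sum
            intro v hv
            have hsub : S1.filter (fun w => G.Adj v w) ⊆ S1.erase v := by
              intro w hw
              rw [Finset.mem_filter] at hw
              rw [Finset.mem_erase]
              exact ⟨(G.ne_of_adj hw.2).symm, hw.1⟩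
            calc (S1.filter (fun w => G.Adj v w)).card ≤ (S1.erase v).card :=
                  Finset.card_le_card hsub
              _ = n1 - 1 := by rw [Finset.card_erase_of_mem hv, hn1]
        _ = n1 * (n1 - 1) := by rw [Finset.sum_const, hn1, smul_eq_mul]
    omega
  have hlb3 : ∑ i ∈ Finset.univ.filter (fun i : Fin N => N - n1 ≤ (i : ℕ)), d i
      ≤ ∑ v ∈ S1, G.degree v := by
    have h1 := tail_sum d hanti A1 hA1card
    have h2 : ∑ i ∈ A1, d i = ∑ v ∈ S1, G.degree v := by
      rw [← himg1 (fun v => G.degree v)]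
      exact Finset.sum_congr rfl fun i _ => by rw [hd i]
    omega
  have hTnat : T = ((∑ i ∈ Finset.univ.filter (fun i : Fin N => N - n1 ≤ (i : ℕ)), d i : ℕ) : ℤ) := by
    rw [hT]; push_cast; rfl
  have hlbZ : LBm10 ≤ (m10 G c : ℤ) := by
    rw [hLB]
    apply max_le
    · exact_mod_cast hlb1
    · have hcomb : (∑ i ∈ Finset.univ.filter (fun i : Fin N => N - n1 ≤ (i : ℕ)), d i)
          ≤ n1 * (n1 - 1) + m10 G c := le_trans hlb3 hlb2
      have hKZ : ((n1 * (n1 - 1) : ℕ) : ℤ) = (n1 : ℤ) * ((n1 : ℤ) - 1) := by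
        rw [Nat.cast_mul, Nat.cast_sub hpos]
        norm_num
      have hcombZ : ((∑ i ∈ Finset.univ.filter (fun i : Fin N => N - n1 ≤ (i : ℕ)), d i : ℕ) : ℤ)
          ≤ ((n1 * (n1 - 1) : ℕ) : ℤ) + (m10 G c : ℤ) := by exact_mod_cast hcomb
      rw [hTnat]
      rw [hKZ] at hcombZ
      linarith
  -- real arithmetic
  have hNpos : (0 : ℝ) < (N : ℝ) * ((N : ℝ) - 1) := by
    have h2 : (2 : ℝ) ≤ (N : ℝ) := by exact_mod_cast hN2
    nlinarith
  have hMpos : (0 : ℝ) < 2 * (M : ℝ) := by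
    have : (1 : ℝ) ≤ (M : ℝ) := by exact_mod_cast hM1
    linarith
  have hmbarpos : 0 < mbar10 := by
    rw [hmbar, hδ]
    apply mul_pos (mul_pos ?_ ?_) (div_pos hMpos hNpos)
    · exact_mod_cast hpos
    · exact_mod_cast hn0pos
  constructor
  · rw [hHmin, hH]
    apply div_le_div_of_nonneg_right ?_ hmbarpos.le
    exact_mod_cast hlbZ
  · rw [hH, hHmax]
    apply div_le_div_of_nonneg_right ?_ hmbarpos.le
    exact_mod_cast hubfin
end
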